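/- For a discrete distribution supported on {0,1,...,n} with probability masses p_i and survival masses s_i = P(X ≥ i), the discrete virtual value φ(i) = i - s_i/p_i is non-decreasing in i if and only if the sequence h(i) = 1/s_i is convex, i.e., h(i+2) - h(i+1) ≥ h(i+1) - h(i) for all valid i. -/

import Mathlib

/-- For a discrete distribution on {0,…,n} with masses p_i > 0 and
survival masses s_i = P(X ≥ i), the discrete virtual value φ(i) = i - s_i/p_i is
non-decreasing iff the sequence h(i) = 1/s_i is convex. -/
theorem discrete_regular_iff_link_convex
    (n : ℕ) (p : ℕ → ℝ)
    (hp : ∀ i, i ≤ n → 0 < p i)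
    (hsum : ∑ i ∈ Finset.range (n + 1), p i = 1)
    (s : ℕ → ℝ) (hs : ∀ i, s i = ∑ j ∈ Finset.Icc i n, p j) :
    (∀ i, i + 1 ≤ n →
        (i : ℝ) - s i / p i ≤ ((i + 1 : ℕ) : ℝ) - s (i + 1) / p (i + 1)) ↔
      (∀ i, i + 2 ≤ n →
        1 / s (i + 1) - 1 / s i ≤ 1 / s (i + 2) - 1 / s (i + 1)) := by
  have hs0 : ∀ i, i ≤ n → 0 < s i := by
    intro i hi
    rw [hs]
    apply Finset.sum_pos
    · intro j hj
      exact hp j (Finset.mem_Icc.mp hj).2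
    · exact ⟨i, Finset.mem_Icc.mpr ⟨le_refl i, hi⟩⟩
  have hps : ∀ i, i ≤ n → p i = s i - s (i + 1) := by
    intro i hi
    have hins : Finset.Icc i n = insert i (Finset.Icc (i + 1) n) := by
      ext j; simp only [Finset.mem_Icc, Finset.mem_insert]; omega
    rw [hs, hs, hins, Finset.sum_insert (by simp)]
    ring
  have key : ∀ i, i + 1 ≤ n →
      (((i : ℝ) - s i / p i ≤ ((i + 1 : ℕ) : ℝ) - s (i + 1) / p (i + 1)) ↔
        p i * s (i + 2) ≤ p (i + 1) * s i) := by
    intro i hi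
    have hpi := hp i (by omega)
    have hpi1 := hp (i + 1) hi
    have h2 : s (i + 2) = s (i + 1) - p (i + 1) := by
      have := hps (i + 1) hi; linarith
    have e : s (i + 1) / p (i + 1) - s i / p i
        = (s (i + 1) * p i - s i * p (i + 1)) / (p (i + 1) * p i) := by
      field_simp
    constructor
    · intro h
      have h' : s (i + 1) / p (i + 1) - s i / p i ≤ 1 := by push_cast at h; linarith
      rw [e, div_le_one (by positivity)] at h'
      rw [h2]; nlinarith
    · intro h
      rw [h2] at h
      have h' : s (i + 1) / p (i + 1) - s i / p i ≤ 1 := by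
        rw [e, div_le_one (by positivity)]; nlinarith
      push_cast; linarith
  have key2 : ∀ i, i + 2 ≤ n →
      ((1 / s (i + 1) - 1 / s i ≤ 1 / s (i + 2) - 1 / s (i + 1)) ↔
        p i * s (i + 2) ≤ p (i + 1) * s i) := by
    intro i hi
    have hs0i := hs0 i (by omega)
    have hs0i1 := hs0 (i + 1) (by omega)
    have hs0i2 := hs0 (i + 2) hi
    have e1 : 1 / s (i + 1) - 1 / s i = p i / (s i * s (i + 1)) := by
      rw [hps i (by omega), eq_div_iff (by positivity)]
      field_simp
    have e2 : 1 / s (i + 2) - 1 / s (i + 1) = p (i + 1) / (s (i + 1) * s (i + 2)) := by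
      rw [hps (i + 1) (by omega), eq_div_iff (by positivity)]
      field_simp
    rw [e1, e2, div_le_div_iff₀ (by positivity) (by positivity)]
    constructor
    · intro h; nlinarith
    · intro h; nlinarith
  constructor
  · intro H i hi2
    exact (key2 i hi2).mpr ((key i (by omega)).mp (H i (by omega)))
  · intro H i hi1
    apply (key i hi1).mpr
    by_cases hc : i + 2 ≤ n
    · exact (key2 i hc).mp (H i hc)
    · have hn2 : s (i + 2) = 0 := by
        rw [hs, Finset.Icc_eq_empty (by omega), Finset.sum_empty]
      rw [hn2, mul_zero]
      exact le_of_lt (mul_pos (hp (i + 1) hi1) (hs0 i (by omega)))
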